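/- Let α > 0 and let A, D be commuting symmetric k×k real matrices with A² + D² = α²I and D invertible. Set N = D⁻¹(A − αI). Then I + N² = 2α(αI + A)⁻¹, and hence √2·(I + N²)^{−1/2} = (I + (1/α)A)^{1/2}. -/

import Mathlib

open Matrix

lemma posDef_smul_aux {n : ℕ} {M : Matrix (Fin n) (Fin n) ℝ} (hM : M.PosDef)
    {c : ℝ} (hc : 0 < c) : (c • M).PosDef := by
  refine ⟨?_, fun x hx => ?_⟩
  · unfold Matrix.IsHermitian
    rw [conjTranspose_smul, hM.1]
    simp
  · exact (hM.smul hc).2 hx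

/-- I+N² = 2α(αI+A)⁻¹, hence √2·(I+N²)^{-1/2} = (I+(1/α)A)^{1/2}. -/
theorem stmt13 (k : ℕ) (α : ℝ) (hα : 0 < α)
    (A D : Matrix (Fin k) (Fin k) ℝ) (hA : A.IsSymm) (hD : D.IsSymm)
    (hAD : A * D = D * A) (hDunit : IsUnit D.det)
    (hsum : A ^ 2 + D ^ 2 = (α ^ 2) • (1 : Matrix (Fin k) (Fin k) ℝ))
    (N : Matrix (Fin k) (Fin k) ℝ)
    (hN : N = D⁻¹ * (A - α • 1)) :
    1 + N ^ 2 = (2 * α) • (α • (1 : Matrix (Fin k) (Fin k) ℝ) + A)⁻¹ ∧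
      ∀ S T : Matrix (Fin k) (Fin k) ℝ, S.PosDef → T.PosDef →
        S ^ 2 = 1 + N ^ 2 → T ^ 2 = 1 + α⁻¹ • A →
        Real.sqrt 2 • S⁻¹ = T := by
  set B : Matrix (Fin k) (Fin k) ℝ := α • 1 + A with hB
  set C : Matrix (Fin k) (Fin k) ℝ := α • 1 - A with hC
  have hD2 : D ^ 2 = (α ^ 2) • 1 - A ^ 2 := by
    rw [← hsum]; abel
  have hCB : C * B = D ^ 2 := by
    rw [hC, hB, hD2]; simp only [pow_two]
    simp only [mul_add, sub_mul, add_mul, mul_sub, smul_mul_assoc, mul_smul_comm,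
      one_mul, mul_one, smul_smul]
    module
  have hD2unit : IsUnit (D ^ 2).det := by
    rw [det_pow]; exact hDunit.pow 2
  have hBunit : IsUnit B.det := by
    have : IsUnit (C.det * B.det) := by rw [← det_mul, hCB]; exact hD2unit
    exact isUnit_of_mul_isUnit_right this
  have hCunit : IsUnit C.det := by
    have : IsUnit (C.det * B.det) := by rw [← det_mul, hCB]; exact hD2unit
    exact isUnit_of_mul_isUnit_left this
  have hcomm : D⁻¹ * A = A * D⁻¹ := by
    have h1 : D⁻¹ * (D * A) * D⁻¹ = D⁻¹ * (A * D) * D⁻¹ := by rw [hAD]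
    rw [← mul_assoc, ← mul_assoc, nonsing_inv_mul D hDunit, one_mul,
      mul_assoc (D⁻¹ * A), mul_nonsing_inv D hDunit, mul_one] at h1
    exact h1.symm
  have hcomm2 : (A - α • 1) * D⁻¹ = D⁻¹ * (A - α • 1) := by
    rw [sub_mul, mul_sub, hcomm, smul_mul_assoc, mul_smul_comm, one_mul, mul_one]
  have hN2 : N ^ 2 = (D⁻¹ * D⁻¹) * ((A - α • 1) * (A - α • 1)) := by
    rw [hN, pow_two]
    rw [mul_assoc, ← mul_assoc (A - α • 1), hcomm2]
    noncomm_ring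
  have hsq : (A - α • 1) * (A - α • 1) = (2 * α) • C - D ^ 2 := by
    rw [hC, hD2]; simp only [pow_two]
    simp only [sub_mul, mul_sub, smul_mul_assoc, mul_smul_comm, one_mul, mul_one,
      smul_smul, smul_sub]
    module
  have hDD : (D⁻¹ * D⁻¹) * D ^ 2 = 1 := by
    rw [pow_two, mul_assoc, ← mul_assoc D⁻¹ D, nonsing_inv_mul D hDunit, one_mul,
      nonsing_inv_mul D hDunit]
  have hDinv : D⁻¹ * D⁻¹ = B⁻¹ * C⁻¹ := by
    rw [← Matrix.mul_inv_rev, ← pow_two, ← hCB, Matrix.mul_inv_rev]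
  have key : 1 + N ^ 2 = (2 * α) • B⁻¹ := by
    rw [hN2, hsq, mul_sub, hDD, mul_smul_comm, hDinv, mul_assoc,
      nonsing_inv_mul C hCunit, mul_one]
    abel
  refine ⟨key, fun S T hS hT hS2 hT2 => ?_⟩
  have hS2' : S ^ 2 = (2 * α) • B⁻¹ := by rw [hS2, key]
  have hT2' : T ^ 2 = α⁻¹ • B := by
    rw [hT2, hB, smul_add, smul_smul, inv_mul_cancel₀ hα.ne', one_smul]
  have hform : (2 * α) • B⁻¹ * ((2 * α)⁻¹ • B) = 1 := by
    rw [smul_mul_smul_comm, nonsing_inv_mul B hBunit,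
      mul_inv_cancel₀ (by positivity : (2 * α) ≠ 0), one_smul]
  have hSinv2 : (S⁻¹) ^ 2 = (2 * α)⁻¹ • B := by
    rw [pow_two, ← Matrix.mul_inv_rev, ← pow_two, hS2']
    exact inv_eq_right_inv hform
  have hsqeq : (Real.sqrt 2 • S⁻¹) ^ 2 = T ^ 2 := by
    rw [smul_pow, hSinv2, hT2', smul_smul, Real.sq_sqrt (by norm_num : (2:ℝ) ≥ 0)]
    rw [mul_inv, ← mul_assoc, mul_inv_cancel₀ (by norm_num : (2:ℝ) ≠ 0), one_mul]
  have hPD : (Real.sqrt 2 • S⁻¹).PosDef :=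
    posDef_smul_aux hS.inv (Real.sqrt_pos.mpr (by norm_num))
  open scoped MatrixOrder in
  exact (CFC.sq_eq_sq_iff _ _ hPD.posSemidef.nonneg hT.posSemidef.nonneg).mp hsqeq
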